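/- Let p and Q be nonzero complex numbers. Then the set of (complex) eigenvalues of the quantum R matrix Ř⁴ is exactly {1, −p²Q^{−2}, p⁴, pQ^{−1}, −pQ^{−1}, p³Q^{−1}, −p³Q^{−1}, p²Q^{−2}, p², −p²}. -/

import Mathlib

open Matrix

noncomputable section

/-- The elementary matrix `E(a,b;c,d)` on `ℂ⁴ ⊗ ℂ⁴`. -/
def E (a b c d : Fin 4) : Matrix (Fin 4 × Fin 4) (Fin 4 × Fin 4) ℂ :=
  Matrix.single (a, b) (c, d) 1

/-- `M ⊗ I₄`, acting on the first two factors of `ℂ⁴ ⊗ ℂ⁴ ⊗ ℂ⁴`. -/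
def op12 (M : Matrix (Fin 4 × Fin 4) (Fin 4 × Fin 4) ℂ) :
    Matrix (Fin 4 × Fin 4 × Fin 4) (Fin 4 × Fin 4 × Fin 4) ℂ :=
  Matrix.of fun x y => M (x.1, x.2.1) (y.1, y.2.1) * (if x.2.2 = y.2.2 then 1 else 0)

/-- `I₄ ⊗ M`, acting on the last two factors of `ℂ⁴ ⊗ ℂ⁴ ⊗ ℂ⁴`. -/
def op23 (M : Matrix (Fin 4 × Fin 4) (Fin 4 × Fin 4) ℂ) :
    Matrix (Fin 4 × Fin 4 × Fin 4) (Fin 4 × Fin 4 × Fin 4) ℂ :=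
  Matrix.of fun x y => (if x.1 = y.1 then 1 else 0) * M (x.2.1, x.2.2) (y.2.1, y.2.2)

/-- The left quantum partial trace `T(C, M)_{a,b} = Σ_{c,d} C_{d,c} M_{(c,a),(d,b)}`. -/
def ptrace (C : Matrix (Fin 4) (Fin 4) ℂ) (M : Matrix (Fin 4 × Fin 4) (Fin 4 × Fin 4) ℂ) :
    Matrix (Fin 4) (Fin 4) ℂ :=
  Matrix.of fun a b => ∑ c : Fin 4, ∑ d : Fin 4, C d c * M (c, a) (d, b)

/-- The quantum R matrix `Ř⁴` (Case 4), with complex parameters `p, Q`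
(indices shifted from 1–4 to 0–3). -/
def R4 (p Q : ℂ) : Matrix (Fin 4 × Fin 4) (Fin 4 × Fin 4) ℂ :=
  E 0 0 0 0
  - (p ^ 2 * Q⁻¹ ^ 2) • (E 1 1 1 1 + E 2 2 2 2)
  + (p ^ 4) • E 3 3 3 3
  + (p * Q⁻¹) • (E 0 1 1 0 + E 0 2 2 0 + E 1 0 0 1 + E 2 0 0 2)
  + (p ^ 3 * Q⁻¹) • (E 1 3 3 1 + E 2 3 3 2 + E 3 1 1 3 + E 3 2 2 3)
  + (p ^ 2 * Q⁻¹ ^ 2) • (E 0 3 3 0 + E 3 0 0 3)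
  - (p ^ 2) • (E 1 2 2 1 + E 2 1 1 2)

set_option maxHeartbeats 2000000 in
lemma R4_mulVec (p Q : ℂ) (v : Fin 4 × Fin 4 → ℂ) (x : Fin 4 × Fin 4) :
    (R4 p Q).mulVec v x =
      !![v (0,0), p*Q⁻¹ * v (1,0), p*Q⁻¹ * v (2,0), p^2*Q⁻¹^2 * v (3,0);
         p*Q⁻¹ * v (0,1), -(p^2*Q⁻¹^2) * v (1,1), -(p^2) * v (2,1), p^3*Q⁻¹ * v (3,1);
         p*Q⁻¹ * v (0,2), -(p^2) * v (1,2), -(p^2*Q⁻¹^2) * v (2,2), p^3*Q⁻¹ * v (3,2);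
         p^2*Q⁻¹^2 * v (0,3), p^3*Q⁻¹ * v (1,3), p^3*Q⁻¹ * v (2,3), p^4 * v (3,3)] x.1 x.2 := by
  obtain ⟨i,j⟩ := x
  fin_cases i <;> fin_cases j <;>
    simp [R4, E, Matrix.mulVec, dotProduct, Fintype.sum_prod_type, Fin.sum_univ_four,
      Matrix.single, Prod.ext_iff]

/-- In a 2×2 antidiagonal block with entry `a`, eigenvector components for a
non-eigenvalue must vanish. -/
lemma pair_zero (lam a x y : ℂ) (ha : a ≠ 0) (h1 : lam ≠ a) (h2 : lam ≠ -a)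
    (e1 : a * y = lam * x) (e2 : a * x = lam * y) : x = 0 ∧ y = 0 := by
  have hx : x = 0 := by
    have h3 : (lam - a) * (lam + a) * x = 0 := by linear_combination (-lam) * e1 + (-a) * e2
    rcases mul_eq_zero.mp h3 with h | h
    · rcases mul_eq_zero.mp h with h | h
      · exact absurd (sub_eq_zero.mp h) h1
      · exact absurd (eq_neg_of_add_eq_zero_left h) h2
    · exact h
  refine ⟨hx, ?_⟩
  have := e1
  rw [hx, mul_zero] at this
  exact (mul_eq_zero.mp this).resolve_left ha

set_option maxHeartbeats 4000000 in
/-- The set of eigenvalues of the quantum R matrix `Ř⁴` is exactly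
`{1, −p²Q⁻², p⁴, pQ⁻¹, −pQ⁻¹, p³Q⁻¹, −p³Q⁻¹, p²Q⁻², p², −p²}`. -/
theorem R4_eigenvalues (p Q : ℂ) (hp : p ≠ 0) (hQ : Q ≠ 0) :
    ∀ lam : ℂ,
      (∃ v : Fin 4 × Fin 4 → ℂ, v ≠ 0 ∧ (R4 p Q).mulVec v = lam • v) ↔
        lam ∈ ({1, -(p ^ 2 * Q⁻¹ ^ 2), p ^ 4, p * Q⁻¹, -(p * Q⁻¹),
                p ^ 3 * Q⁻¹, -(p ^ 3 * Q⁻¹), p ^ 2 * Q⁻¹ ^ 2, p ^ 2, -(p ^ 2)} : Set ℂ) := by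
  have hQi : Q⁻¹ ≠ 0 := inv_ne_zero hQ
  have ha1 : p * Q⁻¹ ≠ 0 := mul_ne_zero hp hQi
  have ha2 : p ^ 3 * Q⁻¹ ≠ 0 := mul_ne_zero (pow_ne_zero _ hp) hQi
  have ha3 : p ^ 2 * Q⁻¹ ^ 2 ≠ 0 := mul_ne_zero (pow_ne_zero _ hp) (pow_ne_zero _ hQi)
  have ha4 : (p ^ 2 : ℂ) ≠ 0 := pow_ne_zero _ hp
  intro lam
  constructor
  · rintro ⟨v, hv, h⟩
    by_contra hmem
    simp only [Set.mem_insert_iff, Set.mem_singleton_iff, not_or] at hmem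
    obtain ⟨h1, h2, h3, h4, h5, h6, h7, h8, h9, h10⟩ := hmem
    apply hv
    have key : ∀ x, (R4 p Q).mulVec v x = lam * v x := by
      intro x; rw [h]; rfl
    have k00 := (R4_mulVec p Q v (0,0)).symm.trans (key (0,0))
    have k01 := (R4_mulVec p Q v (0,1)).symm.trans (key (0,1))
    have k02 := (R4_mulVec p Q v (0,2)).symm.trans (key (0,2))
    have k03 := (R4_mulVec p Q v (0,3)).symm.trans (key (0,3))
    have k10 := (R4_mulVec p Q v (1,0)).symm.trans (key (1,0))
    have k11 := (R4_mulVec p Q v (1,1)).symm.trans (key (1,1))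
    have k12 := (R4_mulVec p Q v (1,2)).symm.trans (key (1,2))
    have k13 := (R4_mulVec p Q v (1,3)).symm.trans (key (1,3))
    have k20 := (R4_mulVec p Q v (2,0)).symm.trans (key (2,0))
    have k21 := (R4_mulVec p Q v (2,1)).symm.trans (key (2,1))
    have k22 := (R4_mulVec p Q v (2,2)).symm.trans (key (2,2))
    have k23 := (R4_mulVec p Q v (2,3)).symm.trans (key (2,3))
    have k30 := (R4_mulVec p Q v (3,0)).symm.trans (key (3,0))
    have k31 := (R4_mulVec p Q v (3,1)).symm.trans (key (3,1))
    have k32 := (R4_mulVec p Q v (3,2)).symm.trans (key (3,2))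
    have k33 := (R4_mulVec p Q v (3,3)).symm.trans (key (3,3))
    simp only [Matrix.cons_val', Matrix.cons_val_zero, Matrix.cons_val_one, Matrix.head_cons,
      Matrix.empty_val', Matrix.cons_val_fin_one, Matrix.head_fin_const,
      Matrix.cons_val_two, Matrix.cons_val_three, Matrix.tail_cons,
      Matrix.of_apply] at k00 k01 k02 k03 k10 k11 k12 k13 k20 k21 k22 k23 k30 k31 k32 k33
    -- diagonal entries
    have z00 : v (0,0) = 0 := by
      have : (lam - 1) * v (0,0) = 0 := by linear_combination -k00
      exact (mul_eq_zero.mp this).resolve_left (sub_ne_zero.mpr h1)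
    have z11 : v (1,1) = 0 := by
      have : (lam + p ^ 2 * Q⁻¹ ^ 2) * v (1,1) = 0 := by linear_combination -k11
      refine (mul_eq_zero.mp this).resolve_left ?_
      intro hc; exact h2 (eq_neg_of_add_eq_zero_left hc)
    have z22 : v (2,2) = 0 := by
      have : (lam + p ^ 2 * Q⁻¹ ^ 2) * v (2,2) = 0 := by linear_combination -k22
      refine (mul_eq_zero.mp this).resolve_left ?_
      intro hc; exact h2 (eq_neg_of_add_eq_zero_left hc)
    have z33 : v (3,3) = 0 := by
      have : (lam - p ^ 4) * v (3,3) = 0 := by linear_combination -k33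
      exact (mul_eq_zero.mp this).resolve_left (sub_ne_zero.mpr h3)
    obtain ⟨z01, z10⟩ := pair_zero lam (p * Q⁻¹) (v (0,1)) (v (1,0)) ha1 h4 h5 k01 k10
    obtain ⟨z02, z20⟩ := pair_zero lam (p * Q⁻¹) (v (0,2)) (v (2,0)) ha1 h4 h5 k02 k20
    obtain ⟨z13, z31⟩ := pair_zero lam (p ^ 3 * Q⁻¹) (v (1,3)) (v (3,1)) ha2 h6 h7 k13 k31
    obtain ⟨z23, z32⟩ := pair_zero lam (p ^ 3 * Q⁻¹) (v (2,3)) (v (3,2)) ha2 h6 h7 k23 k32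
    obtain ⟨z03, z30⟩ := pair_zero lam (p ^ 2 * Q⁻¹ ^ 2) (v (0,3)) (v (3,0)) ha3 h8 h2 k03 k30
    obtain ⟨z12, z21⟩ := pair_zero lam (-(p ^ 2)) (v (1,2)) (v (2,1)) (neg_ne_zero.mpr ha4)
      (by simpa using h10) (by simpa using h9) (by linear_combination k12) (by linear_combination k21)
    funext x
    obtain ⟨i, j⟩ := x
    fin_cases i <;> fin_cases j <;>
      first
      | exact z00 | exact z01 | exact z02 | exact z03
      | exact z10 | exact z11 | exact z12 | exact z13
      | exact z20 | exact z21 | exact z22 | exact z23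
      | exact z30 | exact z31 | exact z32 | exact z33
  · intro hmem
    simp only [Set.mem_insert_iff, Set.mem_singleton_iff] at hmem
    rcases hmem with rfl | rfl | rfl | rfl | rfl | rfl | rfl | rfl | rfl | rfl
    · refine ⟨fun x => if x = (0,0) then 1 else 0, ?_, ?_⟩
      · intro hc
        have := congrFun hc (0,0); simp at this
      · funext x
        rw [R4_mulVec]
        obtain ⟨i, j⟩ := x
        fin_cases i <;> fin_cases j <;> simp [Prod.ext_iff, Matrix.vecHead, Matrix.vecTail]
    · refine ⟨fun x => if x = (1,1) then 1 else 0, ?_, ?_⟩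
      · intro hc
        have := congrFun hc (1,1); simp at this
      · funext x
        rw [R4_mulVec]
        obtain ⟨i, j⟩ := x
        fin_cases i <;> fin_cases j <;> simp [Prod.ext_iff, Matrix.vecHead, Matrix.vecTail]
    · refine ⟨fun x => if x = (3,3) then 1 else 0, ?_, ?_⟩
      · intro hc
        have := congrFun hc (3,3); simp at this
      · funext x
        rw [R4_mulVec]
        obtain ⟨i, j⟩ := x
        fin_cases i <;> fin_cases j <;> simp [Prod.ext_iff, Matrix.vecHead, Matrix.vecTail]
    · refine ⟨fun x => if x = (0,1) then 1 else if x = (1,0) then 1 else 0, ?_, ?_⟩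
      · intro hc
        have := congrFun hc (0,1); simp at this
      · funext x
        rw [R4_mulVec]
        obtain ⟨i, j⟩ := x
        fin_cases i <;> fin_cases j <;> simp [Prod.ext_iff, Matrix.vecHead, Matrix.vecTail]
    · refine ⟨fun x => if x = (0,1) then 1 else if x = (1,0) then -1 else 0, ?_, ?_⟩
      · intro hc
        have := congrFun hc (0,1); simp at this
      · funext x
        rw [R4_mulVec]
        obtain ⟨i, j⟩ := x
        fin_cases i <;> fin_cases j <;> simp [Prod.ext_iff, Matrix.vecHead, Matrix.vecTail] <;> ring
    · refine ⟨fun x => if x = (1,3) then 1 else if x = (3,1) then 1 else 0, ?_, ?_⟩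
      · intro hc
        have := congrFun hc (1,3); simp at this
      · funext x
        rw [R4_mulVec]
        obtain ⟨i, j⟩ := x
        fin_cases i <;> fin_cases j <;> simp [Prod.ext_iff, Matrix.vecHead, Matrix.vecTail]
    · refine ⟨fun x => if x = (1,3) then 1 else if x = (3,1) then -1 else 0, ?_, ?_⟩
      · intro hc
        have := congrFun hc (1,3); simp at this
      · funext x
        rw [R4_mulVec]
        obtain ⟨i, j⟩ := x
        fin_cases i <;> fin_cases j <;> simp [Prod.ext_iff, Matrix.vecHead, Matrix.vecTail] <;> ring
    · refine ⟨fun x => if x = (0,3) then 1 else if x = (3,0) then 1 else 0, ?_, ?_⟩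
      · intro hc
        have := congrFun hc (0,3); simp at this
      · funext x
        rw [R4_mulVec]
        obtain ⟨i, j⟩ := x
        fin_cases i <;> fin_cases j <;> simp [Prod.ext_iff, Matrix.vecHead, Matrix.vecTail]
    · refine ⟨fun x => if x = (1,2) then 1 else if x = (2,1) then -1 else 0, ?_, ?_⟩
      · intro hc
        have := congrFun hc (1,2); simp at this
      · funext x
        rw [R4_mulVec]
        obtain ⟨i, j⟩ := x
        fin_cases i <;> fin_cases j <;> simp [Prod.ext_iff, Matrix.vecHead, Matrix.vecTail] <;> ring
    · refine ⟨fun x => if x = (1,2) then 1 else if x = (2,1) then 1 else 0, ?_, ?_⟩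
      · intro hc
        have := congrFun hc (1,2); simp at this
      · funext x
        rw [R4_mulVec]
        obtain ⟨i, j⟩ := x
        fin_cases i <;> fin_cases j <;> simp [Prod.ext_iff, Matrix.vecHead, Matrix.vecTail]
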